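/- Let T be an ℝ-tree and let E be an infinite set of pairwise disjoint nonempty closed convex subsets (subtrees) of T. Then there exists a sequence (T_n)_{n ∈ ℕ} of pairwise distinct elements of E with the property that, for every n, the set T_{n+1} does not intersect the convex hull of the union T_1 ∪ T_2 ∪ ⋯ ∪ T_n. -/

import Mathlib

open Set

/-- `A` is a topological arc from `x` to `y` in `T`: the image of a continuous injective
map from `[0,1]` sending `0` to `x` and `1` to `y`. -/
def IsTopArc {T : Type*} [MetricSpace T] (A : Set T) (x y : T) : Prop :=
  ∃ f : ℝ → T, ContinuousOn f (Icc 0 1) ∧ InjOn f (Icc 0 1) ∧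
    f 0 = x ∧ f 1 = y ∧ f '' Icc 0 1 = A

/-- `A` is a segment from `x` to `y` in `T`: the image of an isometric embedding of the
real interval `[0, dist x y]` sending the endpoints to `x` and `y`. -/
def IsSegment {T : Type*} [MetricSpace T] (A : Set T) (x y : T) : Prop :=
  ∃ f : ℝ → T,
    (∀ s ∈ Icc (0 : ℝ) (dist x y), ∀ t ∈ Icc (0 : ℝ) (dist x y),
      dist (f s) (f t) = |s - t|) ∧
    f 0 = x ∧ f (dist x y) = y ∧ f '' Icc 0 (dist x y) = A

/-- A metric space `T` is an ℝ-tree if any two points are joined by a segment (an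
isometric copy of `[0, dist x y]`) and the topological arc between any two points is
unique. -/
def IsRTree (T : Type*) [MetricSpace T] : Prop :=
  (∀ x y : T, ∃ A : Set T, IsSegment A x y) ∧
  (∀ x y : T, ∀ A B : Set T, IsTopArc A x y → IsTopArc B x y → A = B)

/-- A subset `C` of an ℝ-tree is convex if it contains the segment between any two of
its points. -/
def RTreeConvex {T : Type*} [MetricSpace T] (C : Set T) : Prop :=
  ∀ x ∈ C, ∀ y ∈ C, ∀ A : Set T, IsSegment A x y → A ⊆ C

/-- The convex hull of a subset of an ℝ-tree: the intersection of all convex subsets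
containing it. -/
def rtConvexHull {T : Type*} [MetricSpace T] (S : Set T) : Set T :=
  ⋂₀ {C : Set T | RTreeConvex C ∧ S ⊆ C}

/-- `A` is an arc of length `ε` in `T`: the image of an isometric embedding of `[0, ε]`. -/
def IsArcOfLength {T : Type*} [MetricSpace T] (ε : ℝ) (A : Set T) : Prop :=
  ∃ f : ℝ → T,
    (∀ s ∈ Icc (0 : ℝ) ε, ∀ t ∈ Icc (0 : ℝ) ε, dist (f s) (f t) = |s - t|) ∧
    f '' Icc 0 ε = A

section AuxLemmas

variable {T : Type*} [MetricSpace T]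

lemma isomOn_continuousOn {f : ℝ → T} {a b : ℝ}
    (h : ∀ s ∈ Icc a b, ∀ t ∈ Icc a b, dist (f s) (f t) = |s - t|) :
    ContinuousOn f (Icc a b) :=
  (LipschitzOnWith.of_dist_le_mul (K := 1) fun x hx y hy => by
    rw [h x hx y hy, NNReal.coe_one, one_mul, Real.dist_eq]).continuousOn

lemma isomOn_injOn {f : ℝ → T} {a b : ℝ}
    (h : ∀ s ∈ Icc a b, ∀ t ∈ Icc a b, dist (f s) (f t) = |s - t|) :
    InjOn f (Icc a b) := by
  intro s hs t ht hst
  have h1 := h s hs t ht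
  rw [hst, dist_self] at h1
  have h2 : s - t = 0 := abs_eq_zero.mp h1.symm
  linarith

lemma isTopArc_of_param {f : ℝ → T} {L : ℝ} (hL : 0 < L)
    (hc : ContinuousOn f (Icc 0 L)) (hi : InjOn f (Icc 0 L)) :
    IsTopArc (f '' Icc 0 L) (f 0) (f L) := by
  have himg : (fun t : ℝ => t * L) '' Icc 0 1 = Icc 0 L := by
    rw [image_mul_right_Icc zero_le_one hL.le, zero_mul, one_mul]
  have hmaps : MapsTo (fun t : ℝ => t * L) (Icc 0 1) (Icc 0 L) := by
    rw [← himg]; exact mapsTo_image _ _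
  refine ⟨fun t => f (t * L), ?_, ?_, by norm_num, by norm_num, ?_⟩
  · exact hc.comp ((continuous_id.mul continuous_const).continuousOn) hmaps
  · intro s hs t ht hst
    have h1 := hi (hmaps hs) (hmaps ht) hst
    exact mul_right_cancel₀ hL.ne' h1
  · rw [show (fun t : ℝ => f (t * L)) = f ∘ (fun t : ℝ => t * L) from rfl, image_comp, himg]

lemma IsSegment.isTopArc {A : Set T} {x y : T} (h : IsSegment A x y) (hxy : x ≠ y) :
    IsTopArc A x y := by
  obtain ⟨f, hf, h0, hd, him⟩ := h
  have hL : 0 < dist x y := dist_pos.mpr hxy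
  have h1 := isTopArc_of_param hL (isomOn_continuousOn hf) (isomOn_injOn hf)
  rwa [h0, hd, him] at h1

lemma IsSegment.eq_singleton {A : Set T} {x : T} (h : IsSegment A x x) : A = {x} := by
  obtain ⟨f, hf, h0, hd, him⟩ := h
  rw [dist_self] at him
  rw [← him, Icc_self, image_singleton, h0]

theorem IsSegment.unique (hT : IsRTree T) {A B : Set T} {x y : T}
    (hA : IsSegment A x y) (hB : IsSegment B x y) : A = B := by
  rcases eq_or_ne x y with rfl | hxy
  · rw [hA.eq_singleton, hB.eq_singleton]
  · exact hT.2 x y A B (hA.isTopArc hxy) (hB.isTopArc hxy)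

/-- The segment between two points of an ℝ-tree, chosen by choice. -/
noncomputable def RTree.seg (hT : IsRTree T) (x y : T) : Set T := (hT.1 x y).choose

lemma RTree.seg_isSegment (hT : IsRTree T) (x y : T) : IsSegment (RTree.seg hT x y) x y :=
  (hT.1 x y).choose_spec

lemma IsSegment.eq_seg (hT : IsRTree T) {A : Set T} {x y : T} (h : IsSegment A x y) :
    A = RTree.seg hT x y :=
  h.unique hT (RTree.seg_isSegment hT x y)

lemma IsSegment.symm {A : Set T} {x y : T} (h : IsSegment A x y) : IsSegment A y x := by
  obtain ⟨f, hf, h0, hd, him⟩ := h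
  have hc : dist y x = dist x y := dist_comm y x
  refine ⟨fun t => f (dist x y - t), ?_, ?_, ?_, ?_⟩
  · intro s hs t ht
    rw [hc] at hs ht
    have hs' : dist x y - s ∈ Icc 0 (dist x y) := ⟨by linarith [hs.2], by linarith [hs.1]⟩
    have ht' : dist x y - t ∈ Icc 0 (dist x y) := ⟨by linarith [ht.2], by linarith [ht.1]⟩
    rw [hf _ hs' _ ht']
    have h1 : dist x y - s - (dist x y - t) = t - s := by ring
    rw [h1, abs_sub_comm]
  · simp only [sub_zero, hd]
  · show f (dist x y - dist y x) = x
    rw [hc, sub_self, h0]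
  · rw [hc, show (fun t : ℝ => f (dist x y - t)) = f ∘ (fun t : ℝ => dist x y - t) from rfl,
      image_comp, image_const_sub_Icc, sub_self, sub_zero, him]

lemma RTree.seg_comm (hT : IsRTree T) (x y : T) : RTree.seg hT x y = RTree.seg hT y x :=
  ((RTree.seg_isSegment hT x y).symm).eq_seg hT

lemma RTree.left_mem_seg (hT : IsRTree T) (x y : T) : x ∈ RTree.seg hT x y := by
  obtain ⟨f, hf, h0, hd, him⟩ := RTree.seg_isSegment hT x y
  rw [← him, ← h0]
  exact mem_image_of_mem f ⟨le_refl 0, dist_nonneg⟩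

lemma RTree.right_mem_seg (hT : IsRTree T) (x y : T) : y ∈ RTree.seg hT x y := by
  rw [RTree.seg_comm]; exact RTree.left_mem_seg hT y x

lemma isSegment_image_Icc {f : ℝ → T} {L s t : ℝ}
    (hf : ∀ u ∈ Icc (0 : ℝ) L, ∀ v ∈ Icc (0 : ℝ) L, dist (f u) (f v) = |u - v|)
    (hs : 0 ≤ s) (hst : s ≤ t) (htL : t ≤ L) :
    IsSegment (f '' Icc s t) (f s) (f t) := by
  have hsm : s ∈ Icc (0 : ℝ) L := ⟨hs, le_trans hst htL⟩
  have htm : t ∈ Icc (0 : ℝ) L := ⟨le_trans hs hst, htL⟩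
  have hd : dist (f s) (f t) = t - s := by
    rw [hf s hsm t htm, abs_sub_comm, abs_of_nonneg (by linarith)]
  refine ⟨fun u => f (s + u), ?_, by norm_num, ?_, ?_⟩
  · rw [hd]
    intro u hu v hv
    have hu' : s + u ∈ Icc (0 : ℝ) L := ⟨by linarith [hu.1], by linarith [hu.2]⟩
    have hv' : s + v ∈ Icc (0 : ℝ) L := ⟨by linarith [hv.1], by linarith [hv.2]⟩
    rw [hf _ hu' _ hv']
    congr 1; ring
  · rw [hd]
    congr 1; ring
  · rw [hd, show (fun u : ℝ => f (s + u)) = f ∘ (fun u : ℝ => s + u) from rfl, image_comp,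
      image_const_add_Icc, add_zero]
    congr 2; ring

lemma seg_eq_image_Icc (hT : IsRTree T) {f : ℝ → T} {L s t : ℝ}
    (hf : ∀ u ∈ Icc (0 : ℝ) L, ∀ v ∈ Icc (0 : ℝ) L, dist (f u) (f v) = |u - v|)
    (hs : 0 ≤ s) (hst : s ≤ t) (htL : t ≤ L) :
    RTree.seg hT (f s) (f t) = f '' Icc s t :=
  ((isSegment_image_Icc hf hs hst htL).eq_seg hT).symm

/-- The tripod lemma: the segment `[x,y]` is contained in `[x,p] ∪ [p,y]`. -/
theorem seg_subset_union (hT : IsRTree T) (x p y : T) :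
    RTree.seg hT x y ⊆ RTree.seg hT x p ∪ RTree.seg hT p y := by
  rcases eq_or_ne x y with rfl | hxy
  · rw [(RTree.seg_isSegment hT x x).eq_singleton]
    exact singleton_subset_iff.mpr (Or.inl (RTree.left_mem_seg hT x p))
  obtain ⟨g, hg, hg0, hga, hgim⟩ := RTree.seg_isSegment hT x p
  obtain ⟨h, hh, hh0, hhb, hhim⟩ := RTree.seg_isSegment hT p y
  set a := dist x p with ha
  set b := dist p y with hb
  have ha0 : (0 : ℝ) ≤ a := dist_nonneg
  have hb0 : (0 : ℝ) ≤ b := dist_nonneg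
  have hBc : IsClosed (RTree.seg hT p y) := by
    rw [← hhim]
    exact (isCompact_Icc.image_of_continuousOn (isomOn_continuousOn hh)).isClosed
  set M := Icc 0 a ∩ g ⁻¹' (RTree.seg hT p y) with hM
  have hMne : M.Nonempty := by
    refine ⟨a, ⟨⟨ha0, le_refl a⟩, ?_⟩⟩
    rw [mem_preimage, hga]
    exact RTree.left_mem_seg hT p y
  have hMcl : IsClosed M := (isomOn_continuousOn hg).preimage_isClosed_of_isClosed isClosed_Icc hBc
  have hMbdd : BddBelow M := bddBelow_Icc.mono inter_subset_left
  set t₀ := sInf M with ht₀def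
  have ht₀M : t₀ ∈ M := hMcl.csInf_mem hMne hMbdd
  have ht₀0 : 0 ≤ t₀ := ht₀M.1.1
  have ht₀a : t₀ ≤ a := ht₀M.1.2
  have hgt₀B : g t₀ ∈ RTree.seg hT p y := ht₀M.2
  have hmin : ∀ u, 0 ≤ u → u < t₀ → g u ∉ RTree.seg hT p y := by
    intro u h0u hu hB
    exact absurd hu (not_lt.mpr (csInf_le hMbdd ⟨⟨h0u, le_trans hu.le ht₀a⟩, hB⟩))
  obtain ⟨s₀, hs₀Icc, hs₀⟩ : ∃ s₀ ∈ Icc (0 : ℝ) b, h s₀ = g t₀ := by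
    rw [← hhim] at hgt₀B
    obtain ⟨s₀, hs₀, he⟩ := hgt₀B
    exact ⟨s₀, hs₀, he⟩
  have hs₀0 : 0 ≤ s₀ := hs₀Icc.1
  have hs₀b : s₀ ≤ b := hs₀Icc.2
  set ℓ := t₀ + (b - s₀) with hℓdef
  have hℓ0 : 0 ≤ ℓ := by rw [hℓdef]; linarith
  set F : ℝ → T := fun u => if u ≤ t₀ then g u else h (s₀ + (u - t₀)) with hFdef
  have hFle : ∀ u, u ≤ t₀ → F u = g u := fun u hu => if_pos hu
  have hFgt : ∀ u, ¬u ≤ t₀ → F u = h (s₀ + (u - t₀)) := fun u hu => if_neg hu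
  have hargmem : ∀ u, t₀ ≤ u → u ≤ ℓ → s₀ + (u - t₀) ∈ Icc (0 : ℝ) b := by
    intro u h1 h2
    rw [hℓdef] at h2
    exact ⟨by linarith, by linarith⟩
  have key : ∀ u ∈ Icc (0 : ℝ) ℓ, ∀ v ∈ Icc (0 : ℝ) ℓ, u ≤ v → dist (F u) (F v) ≤ v - u := by
    intro u hu v hv huv
    by_cases hvt : v ≤ t₀
    · have hut : u ≤ t₀ := le_trans huv hvt
      rw [hFle u hut, hFle v hvt, hg u ⟨hu.1, le_trans hut ht₀a⟩ v ⟨hv.1, le_trans hvt ht₀a⟩,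
        abs_sub_comm, abs_of_nonneg (by linarith)]
    · push_neg at hvt
      have hvarg := hargmem v hvt.le hv.2
      by_cases hut : u ≤ t₀
      · have d1 : dist (g u) (g t₀) = t₀ - u := by
          rw [hg u ⟨hu.1, le_trans hut ht₀a⟩ t₀ ⟨ht₀0, ht₀a⟩, abs_sub_comm,
            abs_of_nonneg (by linarith)]
        have d2 : dist (h s₀) (h (s₀ + (v - t₀))) = v - t₀ := by
          rw [hh s₀ hs₀Icc _ hvarg]
          have h1 : s₀ - (s₀ + (v - t₀)) = -(v - t₀) := by ring
          rw [h1, abs_neg, abs_of_nonneg (by linarith)]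
        calc dist (F u) (F v) ≤ dist (F u) (g t₀) + dist (g t₀) (F v) := dist_triangle _ _ _
          _ = (t₀ - u) + (v - t₀) := by
              rw [hFle u hut, hFgt v (not_le.mpr hvt), d1, ← hs₀, d2]
          _ = v - u := by ring
      · push_neg at hut
        have huarg := hargmem u hut.le hu.2
        rw [hFgt u (not_le.mpr hut), hFgt v (not_le.mpr hvt), hh _ huarg _ hvarg]
        have h1 : s₀ + (u - t₀) - (s₀ + (v - t₀)) = -(v - u) := by ring
        rw [h1, abs_neg, abs_of_nonneg (by linarith)]
  have hFlip : LipschitzOnWith 1 F (Icc 0 ℓ) := by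
    apply LipschitzOnWith.of_dist_le_mul
    intro u hu v hv
    rw [NNReal.coe_one, one_mul, Real.dist_eq]
    rcases le_total u v with h' | h'
    · calc dist (F u) (F v) ≤ v - u := key u hu v hv h'
        _ ≤ |v - u| := le_abs_self _
        _ = |u - v| := abs_sub_comm _ _
    · calc dist (F u) (F v) = dist (F v) (F u) := dist_comm _ _
        _ ≤ u - v := key v hv u hu h'
        _ ≤ |u - v| := le_abs_self _
  have hFc : ContinuousOn F (Icc 0 ℓ) := hFlip.continuousOn
  have hFinj : InjOn F (Icc 0 ℓ) := by
    have main : ∀ u v, u ∈ Icc (0 : ℝ) ℓ → v ∈ Icc (0 : ℝ) ℓ → u < v → F u ≠ F v := by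
      intro u v hu hv huv heq
      by_cases hvt : v ≤ t₀
      · have hut : u ≤ t₀ := le_trans huv.le hvt
        rw [hFle u hut, hFle v hvt] at heq
        have := isomOn_injOn hg ⟨hu.1, le_trans hut ht₀a⟩ ⟨hv.1, le_trans hvt ht₀a⟩ heq
        exact absurd this huv.ne
      · push_neg at hvt
        have hvarg := hargmem v hvt.le hv.2
        rw [hFgt v (not_le.mpr hvt)] at heq
        by_cases hut : u ≤ t₀
        · rw [hFle u hut] at heq
          have hguB : g u ∈ RTree.seg hT p y := by
            rw [heq, ← hhim]
            exact mem_image_of_mem h hvarg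
          have ht₀u : t₀ ≤ u := by
            by_contra hlt
            push_neg at hlt
            exact hmin u hu.1 hlt hguB
          have hueq : u = t₀ := le_antisymm hut ht₀u
          rw [hueq, ← hs₀] at heq
          have := isomOn_injOn hh hs₀Icc hvarg heq
          have : v = t₀ := by linarith [this]
          exact absurd this (by linarith [hvt])
        · push_neg at hut
          have huarg := hargmem u hut.le hu.2
          rw [hFgt u (not_le.mpr hut)] at heq
          have := isomOn_injOn hh huarg hvarg heq
          have : u = v := by linarith [this]
          exact absurd this huv.ne
    intro u hu v hv heq
    rcases lt_trichotomy u v with h' | h' | h'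
    · exact absurd heq (main u v hu hv h')
    · exact h'
    · exact absurd heq.symm (main v u hv hu h')
  have hF0 : F 0 = x := by rw [hFle 0 ht₀0, hg0]
  have hFℓ : F ℓ = y := by
    by_cases hc : ℓ ≤ t₀
    · have hsb : s₀ = b := by rw [hℓdef] at hc; linarith
      have hlt : ℓ = t₀ := by rw [hℓdef, hsb]; ring
      rw [hFle ℓ hc, hlt, ← hs₀, hsb, hhb]
    · rw [hFgt ℓ hc]
      have h1 : s₀ + (ℓ - t₀) = b := by rw [hℓdef]; ring
      rw [h1, hhb]
  have hℓpos : 0 < ℓ := by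
    rcases eq_or_lt_of_le hℓ0 with heq | hlt
    · exfalso
      have hℓeq : t₀ + (b - s₀) = 0 := by rw [← hℓdef, ← heq]
      have ht0 : t₀ = 0 := by linarith
      have hsb : s₀ = b := by linarith
      apply hxy
      calc x = g 0 := hg0.symm
        _ = g t₀ := by rw [ht0]
        _ = h s₀ := hs₀.symm
        _ = h b := by rw [hsb]
        _ = y := hhb
    · exact hlt
  have hFim : F '' Icc 0 ℓ ⊆ RTree.seg hT x p ∪ RTree.seg hT p y := by
    rintro _ ⟨u, hu, rfl⟩
    by_cases hut : u ≤ t₀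
    · left
      rw [← hgim, hFle u hut]
      exact mem_image_of_mem g ⟨hu.1, le_trans hut ht₀a⟩
    · right
      rw [← hhim, hFgt u hut]
      push_neg at hut
      exact mem_image_of_mem h (hargmem u hut.le hu.2)
  have harc : IsTopArc (F '' Icc 0 ℓ) x y := by
    have h1 := isTopArc_of_param hℓpos hFc hFinj
    rwa [hF0, hFℓ] at h1
  have harcS : IsTopArc (RTree.seg hT x y) x y := (RTree.seg_isSegment hT x y).isTopArc hxy
  rw [hT.2 x y (RTree.seg hT x y) (F '' Icc 0 ℓ) harcS harc]
  exact hFim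

lemma rTreeConvex_of_star (hT : IsRTree T) {K : Set T} {p : T}
    (hstar : ∀ z ∈ K, RTree.seg hT p z ⊆ K) : RTreeConvex K := by
  intro u hu v hv A hA
  rw [hA.eq_seg hT]
  intro z hz
  rcases seg_subset_union hT u p v hz with h | h
  · exact hstar u hu (by rwa [RTree.seg_comm hT u p] at h)
  · exact hstar v hv h

lemma seg_initial (hT : IsRTree T) {p q z : T} (hz : z ∈ RTree.seg hT p q) :
    RTree.seg hT p z ⊆ RTree.seg hT p q := by
  obtain ⟨f, hf, h0, hd, him⟩ := RTree.seg_isSegment hT p q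
  rw [← him] at hz
  obtain ⟨s, hs, rfl⟩ := hz
  have h1 : RTree.seg hT (f 0) (f s) = f '' Icc 0 s := seg_eq_image_Icc hT hf le_rfl hs.1 hs.2
  have h2 : RTree.seg hT p (f s) = f '' Icc 0 s := by rw [← h0]; exact h1
  rw [h2, ← him]
  exact image_mono (f := f) (Icc_subset_Icc le_rfl hs.2)

lemma RTreeConvex.seg_subset {C : Set T} (hC : RTreeConvex C) (hT : IsRTree T) {u v : T}
    (hu : u ∈ C) (hv : v ∈ C) : RTree.seg hT u v ⊆ C :=
  hC u hu v hv _ (RTree.seg_isSegment hT u v)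

lemma rtConvexHull_subset {K S : Set T} (hK : RTreeConvex K) (hSK : S ⊆ K) :
    rtConvexHull S ⊆ K :=
  sInter_subset_of_mem ⟨hK, hSK⟩

/-- Any infinite subset of a compact real interval contains a strictly monotone sequence. -/
lemma exists_strictMono_or_anti {S : Set ℝ} {a b : ℝ} (hS : S.Infinite) (hsub : S ⊆ Icc a b) :
    ∃ w : ℕ → ℝ, (∀ n, w n ∈ S) ∧ (StrictMono w ∨ StrictAnti w) := by
  obtain ⟨c, -, hacc⟩ := hS.exists_accPt_of_subset_isCompact isCompact_Icc hsub
  rw [accPt_iff_nhds] at hacc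
  by_cases hleft : ∀ ε > (0 : ℝ), ∃ z ∈ S, c - ε < z ∧ z < c
  · have hstep : ∀ s : Finset ℝ, (∀ q ∈ s, q ∈ S ∧ q < c) →
        ∃ z, (z ∈ S ∧ z < c) ∧ ∀ q ∈ s, q < z := by
      intro s hs
      by_cases hne : s.Nonempty
      · set m := s.max' hne with hm
        have hmc : m < c := (hs m (s.max'_mem hne)).2
        obtain ⟨z, hzS, hz1, hz2⟩ := hleft (c - m) (by linarith)
        refine ⟨z, ⟨hzS, hz2⟩, fun q hq => ?_⟩
        exact lt_of_le_of_lt (s.le_max' q hq) (by linarith)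
      · obtain ⟨z, hzS, -, hz2⟩ := hleft 1 one_pos
        exact ⟨z, ⟨hzS, hz2⟩, fun q hq => absurd ⟨q, hq⟩ hne⟩
    obtain ⟨w, hw, hw2⟩ := exists_seq_of_forall_finset_exists (fun z : ℝ => z ∈ S ∧ z < c)
      (fun u v => u < v) hstep
    exact ⟨w, fun n => (hw n).1, Or.inl fun m n h => hw2 m n h⟩
  · push_neg at hleft
    obtain ⟨ε₀, hε₀, hno⟩ := hleft
    have hright : ∀ ε > (0 : ℝ), ∃ z ∈ S, c < z ∧ z < c + ε := by
      intro ε hε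
      obtain ⟨z, hzmem, hzne⟩ := hacc (Metric.ball c (min ε ε₀))
        (Metric.ball_mem_nhds c (lt_min hε hε₀))
      obtain ⟨hzU, hzS⟩ := hzmem
      rw [Metric.mem_ball, Real.dist_eq] at hzU
      have habs := abs_lt.mp hzU
      rcases lt_or_gt_of_ne hzne with h | h
      · exfalso
        have h1 : c - ε₀ < z := by have := habs.1; have := min_le_right ε ε₀; linarith
        have h2 := hno z hzS h1
        linarith
      · exact ⟨z, hzS, h, by have := habs.2; have := min_le_left ε ε₀; linarith⟩
    have hstep : ∀ s : Finset ℝ, (∀ q ∈ s, q ∈ S ∧ c < q) →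
        ∃ z, (z ∈ S ∧ c < z) ∧ ∀ q ∈ s, z < q := by
      intro s hs
      by_cases hne : s.Nonempty
      · set m := s.min' hne with hm
        have hmc : c < m := (hs m (s.min'_mem hne)).2
        obtain ⟨z, hzS, hz1, hz2⟩ := hright (m - c) (by linarith)
        refine ⟨z, ⟨hzS, hz1⟩, fun q hq => ?_⟩
        exact lt_of_lt_of_le (by linarith) (s.min'_le q hq)
      · obtain ⟨z, hzS, hz1, -⟩ := hright 1 one_pos
        exact ⟨z, ⟨hzS, hz1⟩, fun q hq => absurd ⟨q, hq⟩ hne⟩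
    obtain ⟨w, hw, hw2⟩ := exists_seq_of_forall_finset_exists (fun z : ℝ => z ∈ S ∧ c < z)
      (fun u v => v < u) hstep
    exact ⟨w, fun n => (hw n).1, Or.inr fun m n h => hw2 m n h⟩

lemma caseA_aux (hT : IsRTree T) {D : ℕ → Set T} {φ : ℝ → T} {L : ℝ}
    (hφ : ∀ s ∈ Icc (0 : ℝ) L, ∀ t ∈ Icc (0 : ℝ) L, dist (φ s) (φ t) = |s - t|)
    (hconv : ∀ n, RTreeConvex (D n))
    (hdisj : Pairwise (Function.onFun Disjoint D))
    {w : ℕ → ℝ} (hw : StrictMono w) (hwmem : ∀ n, w n ∈ Icc (0 : ℝ) L)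
    (hφw : ∀ n, φ (w n) ∈ D n) (n : ℕ) :
    Disjoint (D (n + 1)) (rtConvexHull (⋃ i ∈ Finset.range (n + 1), D i)) := by
  have hwn := hwmem n
  set K := (⋃ i ∈ Finset.range (n + 1), D i) ∪ φ '' Icc 0 (w n) with hK
  have hKconv : RTreeConvex K := by
    apply rTreeConvex_of_star hT (p := φ 0)
    intro z hz
    rcases hz with hz | hz
    · rw [mem_iUnion₂] at hz
      obtain ⟨i, hi, hzD⟩ := hz
      have hwi := hwmem i
      have hin : w i ≤ w n := hw.monotone (Finset.mem_range_succ_iff.mp hi)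
      have h1 : RTree.seg hT (φ 0) (φ (w i)) = φ '' Icc 0 (w i) :=
        seg_eq_image_Icc hT hφ le_rfl hwi.1 hwi.2
      intro q hq
      rcases seg_subset_union hT (φ 0) (φ (w i)) z hq with h | h
      · right
        rw [h1] at h
        exact image_mono (f := φ) (Icc_subset_Icc le_rfl hin) h
      · left
        exact mem_iUnion₂.mpr ⟨i, hi, (hconv i).seg_subset hT (hφw i) hzD h⟩
    · obtain ⟨s, hs, rfl⟩ := hz
      have hsL : s ∈ Icc (0 : ℝ) L := ⟨hs.1, le_trans hs.2 hwn.2⟩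
      have h1 : RTree.seg hT (φ 0) (φ s) = φ '' Icc 0 s :=
        seg_eq_image_Icc hT hφ le_rfl hs.1 hsL.2
      intro q hq
      right
      rw [h1] at hq
      exact image_mono (f := φ) (Icc_subset_Icc le_rfl hs.2) hq
  have hdisjK : Disjoint (D (n + 1)) K := by
    rw [hK, disjoint_union_right]
    constructor
    · simp only [disjoint_iUnion_right]
      intro i hi
      have hi' : i < n + 1 := Finset.mem_range.mp hi
      exact hdisj (show n + 1 ≠ i by omega)
    · rw [Set.disjoint_left]
      rintro q hq ⟨s, hs, rfl⟩
      have hwn1 := hwmem (n + 1)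
      have hs1 : s ≤ w (n + 1) := le_trans hs.2 (hw (Nat.lt_succ_self n)).le
      have hseg : RTree.seg hT (φ s) (φ (w (n + 1))) = φ '' Icc s (w (n + 1)) :=
        seg_eq_image_Icc hT hφ hs.1 hs1 hwn1.2
      have hsub : φ '' Icc s (w (n + 1)) ⊆ D (n + 1) := by
        rw [← hseg]
        exact (hconv (n + 1)).seg_subset hT hq (hφw (n + 1))
      have hmem : φ (w n) ∈ D (n + 1) :=
        hsub ⟨w n, ⟨hs.2, (hw (Nat.lt_succ_self n)).le⟩, rfl⟩
      exact Set.disjoint_left.mp (hdisj (show n ≠ n + 1 by omega)) (hφw n) hmem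
  exact hdisjK.mono_right (rtConvexHull_subset hKconv subset_union_left)

end AuxLemmas

/-- Given an infinite set of pairwise disjoint nonempty closed convex
subsets of an ℝ-tree, one can extract a sequence of pairwise distinct members such that
each term avoids the convex hull of the union of the previous ones. -/
theorem exists_seq_avoiding_convexHull {T : Type*} [MetricSpace T] (hT : IsRTree T)
    (E : Set (Set T)) (hinf : E.Infinite)
    (hmem : ∀ C ∈ E, C.Nonempty ∧ IsClosed C ∧ RTreeConvex C)
    (hdisj : E.Pairwise Disjoint) :
    ∃ f : ℕ → Set T, (∀ n, f n ∈ E) ∧ Function.Injective f ∧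
      ∀ n : ℕ, Disjoint (f (n + 1)) (rtConvexHull (⋃ i ∈ Finset.range (n + 1), f i)) := by
  classical
  by_cases hcase : ∃ (x y : T) (A : Set T), IsSegment A x y ∧
      {C | C ∈ E ∧ (C ∩ A).Nonempty}.Infinite
  · -- Case A: some segment meets infinitely many members of E.
    obtain ⟨x, y, A, hA, hEA⟩ := hcase
    obtain ⟨φ, hφ, hφ0, hφL, hφim⟩ := hA
    set L := dist x y with hLdef
    set E' := {C | C ∈ E ∧ (C ∩ A).Nonempty} with hE'def
    have hex : ∀ C ∈ E', ∃ s, s ∈ Icc (0 : ℝ) L ∧ φ s ∈ C := by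
      rintro C ⟨hCE, z, hzC, hzA⟩
      rw [← hφim] at hzA
      obtain ⟨s, hs, rfl⟩ := hzA
      exact ⟨s, hs, hzC⟩
    choose! u hu1 hu2 using hex
    set g : ℕ ↪ ↥E' := Set.Infinite.natEmbedding E' hEA with hgdef
    have hgE' : ∀ n, (g n : Set T) ∈ E' := fun n => (g n).2
    set v : ℕ → ℝ := fun n => u ((g n : Set T)) with hvdef
    have hvmem : ∀ n, v n ∈ Icc (0 : ℝ) L := fun n => hu1 _ (hgE' n)
    have hφv : ∀ n, φ (v n) ∈ (g n : Set T) := fun n => hu2 _ (hgE' n)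
    have hvinj : Function.Injective v := by
      intro m n hmn
      by_contra hne
      have hgne : (g m : Set T) ≠ (g n : Set T) := fun h => hne (g.injective (Subtype.ext h))
      have hd := hdisj (hgE' m).1 (hgE' n).1 hgne
      exact Set.disjoint_left.mp hd (hφv m) (by rw [hmn]; exact hφv n)
    have hrange : (range v).Infinite := infinite_range_of_injective hvinj
    obtain ⟨w, hwS, hmono⟩ := exists_strictMono_or_anti hrange (range_subset_iff.mpr hvmem)
    have hwinj : Function.Injective w := by
      rcases hmono with h | h
      exacts [h.injective, h.injective]
    choose k hk using fun n => hwS n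
    have hkinj : Function.Injective k := by
      intro m n h
      exact hwinj (by rw [← hk m, ← hk n, h])
    set D : ℕ → Set T := fun n => ((g (k n)) : Set T) with hDdef
    have hDE : ∀ n, D n ∈ E := fun n => (hgE' (k n)).1
    have hDinj : Function.Injective D := fun m n h => hkinj (g.injective (Subtype.ext h))
    have hDdisj : Pairwise (Function.onFun Disjoint D) := fun m n hmn =>
      hdisj (hDE m) (hDE n) fun h => hmn (hDinj h)
    have hDconv : ∀ n, RTreeConvex (D n) := fun n => (hmem _ (hDE n)).2.2
    have hφw : ∀ n, φ (w n) ∈ D n := fun n => by rw [← hk n]; exact hφv (k n)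
    have hwmem : ∀ n, w n ∈ Icc (0 : ℝ) L := fun n => by rw [← hk n]; exact hvmem (k n)
    refine ⟨D, hDE, hDinj, ?_⟩
    intro n
    rcases hmono with hsm | hsa
    · exact caseA_aux hT hφ hDconv hDdisj hsm hwmem hφw n
    · have hψiso : ∀ s ∈ Icc (0 : ℝ) L, ∀ t ∈ Icc (0 : ℝ) L,
          dist (φ (L - s)) (φ (L - t)) = |s - t| := by
        intro s hs t ht
        rw [hφ (L - s) ⟨by linarith [hs.2], by linarith [hs.1]⟩
          (L - t) ⟨by linarith [ht.2], by linarith [ht.1]⟩]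
        have h1 : L - s - (L - t) = t - s := by ring
        rw [h1, abs_sub_comm]
      have hw'mono : StrictMono (fun m => L - w m) := by
        intro m m' h
        have h2 := hsa h
        dsimp only
        linarith
      have hw'mem : ∀ m, L - w m ∈ Icc (0 : ℝ) L := fun m =>
        ⟨by linarith [(hwmem m).2], by linarith [(hwmem m).1]⟩
      have hψw : ∀ m, φ (L - (L - w m)) ∈ D m := fun m => by
        rw [sub_sub_cancel]
        exact hφw m
      exact caseA_aux hT (φ := fun t => φ (L - t)) hψiso hDconv hDdisj hw'mono hw'mem hψw n
  · -- Case B: every segment meets only finitely many members of E.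
    push_neg at hcase
    have hfin : ∀ q₁ q₂ : T, {C | C ∈ E ∧ (C ∩ RTree.seg hT q₁ q₂).Nonempty}.Finite :=
      fun q₁ q₂ => (hcase q₁ q₂ _ (RTree.seg_isSegment hT q₁ q₂))
    obtain ⟨C₀, hC₀⟩ := hinf.nonempty
    obtain ⟨p, hp⟩ := (hmem C₀ hC₀).1
    have : Nonempty T := ⟨p⟩
    choose! pt hpt using fun C (hC : C ∈ E) => (hmem C hC).1
    have hstep : ∀ s : Finset (Set T), (∀ X ∈ s, X ∈ E) →
        ∃ Y, Y ∈ E ∧ ∀ X ∈ s, Disjoint Y (X ∪ RTree.seg hT p (pt X)) := by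
      intro s hs
      set bad := (↑s : Set (Set T)) ∪
        ⋃ X ∈ (↑s : Set (Set T)), {C | C ∈ E ∧ (C ∩ RTree.seg hT p (pt X)).Nonempty} with hbaddef
      have hbadfin : bad.Finite :=
        s.finite_toSet.union (s.finite_toSet.biUnion fun X _ => hfin p (pt X))
      obtain ⟨Y, hYmem⟩ := (hinf.diff hbadfin).nonempty
      obtain ⟨hYE, hYbad⟩ := hYmem
      refine ⟨Y, hYE, ?_⟩
      intro X hXs
      have hYX : Y ≠ X := by
        intro h
        exact hYbad (Or.inl (by rw [h]; exact Finset.mem_coe.mpr hXs))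
      have h1 : Disjoint Y X := hdisj hYE (hs X hXs) hYX
      have h2 : Disjoint Y (RTree.seg hT p (pt X)) := by
        by_contra h
        rw [Set.not_disjoint_iff_nonempty_inter] at h
        exact hYbad (Or.inr (mem_biUnion (Finset.mem_coe.mpr hXs) ⟨hYE, h⟩))
      exact disjoint_union_right.mpr ⟨h1, h2⟩
    obtain ⟨f, hfE, hfr⟩ := exists_seq_of_forall_finset_exists (· ∈ E)
      (fun X Y => Disjoint Y (X ∪ RTree.seg hT p (pt X))) hstep
    have hne : ∀ m n, m < n → f m ≠ f n := by
      intro m n h hmn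
      have hrd := hfr m n h
      have h1 : Disjoint (f n) (f m) := (disjoint_union_right.mp hrd).1
      obtain ⟨z, hz⟩ := (hmem (f m) (hfE m)).1
      exact Set.disjoint_left.mp h1 (hmn ▸ hz) hz
    have hinj : Function.Injective f := by
      intro m n h
      rcases lt_trichotomy m n with h' | h' | h'
      · exact absurd h (hne m n h')
      · exact h'
      · exact absurd h.symm (hne n m h')
    refine ⟨f, hfE, hinj, ?_⟩
    intro n
    set K := ⋃ i ∈ Finset.range (n + 1), (f i ∪ RTree.seg hT p (pt (f i))) with hKdef
    have hKconv : RTreeConvex K := by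
      apply rTreeConvex_of_star hT (p := p)
      intro z hz
      rw [hKdef, mem_iUnion₂] at hz
      obtain ⟨i, hi, hz⟩ := hz
      have hpti : pt (f i) ∈ f i := hpt (f i) (hfE i)
      intro q hq
      rcases hz with hz | hz
      · rcases seg_subset_union hT p (pt (f i)) z hq with h | h
        · exact mem_iUnion₂.mpr ⟨i, hi, Or.inr h⟩
        · exact mem_iUnion₂.mpr ⟨i, hi, Or.inl (((hmem (f i) (hfE i)).2.2).seg_subset hT hpti hz h)⟩
      · exact mem_iUnion₂.mpr ⟨i, hi, Or.inr (seg_initial hT hz hq)⟩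
    have hsub : (⋃ i ∈ Finset.range (n + 1), f i) ⊆ K :=
      iUnion₂_mono fun i _ => subset_union_left
    have hdisjK : Disjoint (f (n + 1)) K := by
      rw [hKdef]
      simp only [disjoint_iUnion_right]
      intro i hi
      exact hfr i (n + 1) (Finset.mem_range.mp hi)
    exact hdisjK.mono_right (rtConvexHull_subset hKconv hsub)
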